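/- Let k be a field of characteristic zero and let M^• be a cosimplicial Σ•-module over k, with differential A* = Σ_{j=0}^{n} (−1)^j A_j : M^{n−1} → M^n (so that A*∘A* = 0) and cohomology H^n(M^•) = ker(A*: M^n → M^{n+1})/im(A*: M^{n−1} → M^n). Then sM^• and rM^• are subcomplexes, and the natural map H^n(sM^•) ⊕ H^n(rM^•) → H^n(M^•) induced by the inclusions of subcomplexes is an isomorphism for every n; that is, the cohomology of M^• has a sign decomposition H^•(M^•) = sH^•(M^•) ⊕ rH^•(M^•). -/

import Mathlib

/-- The alternating operator `Alt = (1/N!) Σ_{σ ∈ Σ_N} sgn(σ) σ` associated to a linear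
action `ρ` of the symmetric group `Σ_N` on a `k`-vector space. -/
noncomputable def altOp (k : Type*) [Field k] {M : Type*} [AddCommGroup M] [Module k M]
    {N : ℕ} (ρ : Equiv.Perm (Fin N) →* Module.End k M) : Module.End k M :=
  (Nat.factorial N : k)⁻¹ •
    ∑ σ : Equiv.Perm (Fin N), (((Equiv.Perm.sign σ : ℤ) : k)) • ρ σ

open Equiv Equiv.Perm Finset

section helpers
variable {k : Type*} [Field k] {M : Type*} [AddCommGroup M] [Module k M] {N : ℕ}
  (ρ : Equiv.Perm (Fin N) →* Module.End k M)

lemma sign_cast_sq (σ : Perm (Fin N)) :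
    ((Perm.sign σ : ℤ) : k) * ((Perm.sign σ : ℤ) : k) = 1 := by
  rcases Int.units_eq_one_or (Perm.sign σ) with h | h <;> simp [h]

lemma altOp_apply (v : M) :
    altOp k ρ v = (Nat.factorial N : k)⁻¹ •
      ∑ σ : Perm (Fin N), ((Perm.sign σ : ℤ) : k) • ρ σ v := by
  simp [altOp, LinearMap.sum_apply]

variable [CharZero k]

lemma avg_cancel (x : M) :
    (Nat.factorial N : k)⁻¹ •
      ∑ σ : Perm (Fin N), ((Perm.sign σ : ℤ) : k) • ((Perm.sign σ : ℤ) : k) • x = x := by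
  have : ∀ σ : Perm (Fin N), ((Perm.sign σ : ℤ) : k) • ((Perm.sign σ : ℤ) : k) • x = x := by
    intro σ; rw [smul_smul, sign_cast_sq, one_smul]
  rw [Finset.sum_congr rfl fun σ _ => this σ, Finset.sum_const, Finset.card_univ,
    Fintype.card_perm, Fintype.card_fin]
  rw [← Nat.cast_smul_eq_nsmul k, smul_smul, inv_mul_cancel₀, one_smul]
  exact_mod_cast Nat.cast_ne_zero.mpr (Nat.factorial_ne_zero N)

lemma rho_altOp (σ : Perm (Fin N)) (v : M) :
    ρ σ (altOp k ρ v) = ((Perm.sign σ : ℤ) : k) • altOp k ρ v := by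
  rw [altOp_apply, map_smul, map_sum, smul_comm]
  congr 1
  rw [Finset.smul_sum]
  refine Fintype.sum_equiv (Equiv.mulLeft σ) _ _ fun π => ?_
  simp only [Equiv.coe_mulLeft, map_smul, ← Module.End.mul_apply, ← map_mul, smul_smul]
  congr 1
  rw [map_mul]
  push_cast
  rw [← mul_assoc, sign_cast_sq, one_mul]

lemma altOp_fixed_of_sign {w : M} (hw : ∀ σ : Perm (Fin N), ρ σ w = ((Perm.sign σ : ℤ) : k) • w) :
    altOp k ρ w = w := by
  rw [altOp_apply]
  rw [Finset.sum_congr rfl fun σ _ => by rw [hw σ]]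
  exact avg_cancel w

lemma altOp_idem (v : M) : altOp k ρ (altOp k ρ v) = altOp k ρ v :=
  altOp_fixed_of_sign ρ fun σ => rho_altOp ρ σ v

lemma rho_of_alt_fixed {v : M} (hv : altOp k ρ v = v) (σ : Perm (Fin N)) :
    ρ σ v = ((Perm.sign σ : ℤ) : k) • v := by
  conv_lhs => rw [← hv]
  rw [rho_altOp, hv]

end helpers

lemma altOp_rho {k : Type*} [Field k] {M : Type*} [AddCommGroup M] [Module k M] {N : ℕ}
    (ρ : Equiv.Perm (Fin N) →* Module.End k M) (σ : Perm (Fin N)) (v : M) :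
    altOp k ρ (ρ σ v) = ((Perm.sign σ : ℤ) : k) • altOp k ρ v := by
  rw [altOp_apply, altOp_apply, smul_comm]
  congr 1
  rw [Finset.smul_sum]
  refine Fintype.sum_equiv (Equiv.mulRight σ) _ _ fun π => ?_
  simp only [Equiv.coe_mulRight, ← Module.End.mul_apply, ← map_mul, smul_smul]
  congr 1
  rw [map_mul]
  push_cast
  rcases Int.units_eq_one_or (Perm.sign σ) with h | h <;> simp [h] <;> ring

/-- The differential `A* = Σ_{j} (−1)^j A_j : M^n → M^{n+1}` of a cosimplicial module. -/
noncomputable def AStar {k : Type*} [Field k] {M : ℕ → Type*}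
    [∀ n, AddCommGroup (M n)] [∀ n, Module k (M n)]
    (A : ∀ n, ℕ → (M n →ₗ[k] M (n + 1))) (n : ℕ) : M n →ₗ[k] M (n + 1) :=
  ∑ j ∈ Finset.range (n + 2), ((-1 : k) ^ j) • A n j

section main
variable (k : Type*) [Field k] [CharZero k]
    (M : ℕ → Type*) [∀ n, AddCommGroup (M n)] [∀ n, Module k (M n)]
    (ρ : ∀ n, Equiv.Perm (Fin (n + 1)) →* Module.End k (M n))
    (A : ∀ n, ℕ → (M n →ₗ[k] M (n + 1)))

lemma AStar_apply (n : ℕ) (v : M n) :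
    AStar A n v = ∑ j ∈ Finset.range (n + 2), ((-1 : k) ^ j) • A n j v := by
  simp [AStar, LinearMap.sum_apply]

variable
    (hswap_lt : ∀ (n i j : ℕ), ∀ _ : 1 ≤ i, ∀ hin : i ≤ n + 1, j + 1 < i →
      ((ρ (n + 1) (Equiv.swap (⟨i - 1, Nat.lt_of_le_of_lt (Nat.sub_le i 1) (Nat.lt_succ_of_le hin)⟩ : Fin (n + 2)) ⟨i, Nat.lt_succ_of_le hin⟩) :
          M (n + 1) →ₗ[k] M (n + 1))) ∘ₗ A n j
        = A n j ∘ₗ ((ρ n (Equiv.swap (⟨i - 2, Nat.lt_of_lt_of_le (by omega : i - 2 < i) hin⟩ : Fin (n + 1)) ⟨i - 1, Nat.lt_of_lt_of_le (by omega : i - 1 < i) hin⟩) :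
            M n →ₗ[k] M n)))
    (hswap_eq1 : ∀ (n i : ℕ), ∀ _ : 1 ≤ i, ∀ hin : i ≤ n + 1,
      ((ρ (n + 1) (Equiv.swap (⟨i - 1, Nat.lt_of_le_of_lt (Nat.sub_le i 1) (Nat.lt_succ_of_le hin)⟩ : Fin (n + 2)) ⟨i, Nat.lt_succ_of_le hin⟩) :
          M (n + 1) →ₗ[k] M (n + 1))) ∘ₗ A n (i - 1) = A n i)
    (hswap_eq2 : ∀ (n i : ℕ), ∀ _ : 1 ≤ i, ∀ hin : i ≤ n + 1,
      ((ρ (n + 1) (Equiv.swap (⟨i - 1, Nat.lt_of_le_of_lt (Nat.sub_le i 1) (Nat.lt_succ_of_le hin)⟩ : Fin (n + 2)) ⟨i, Nat.lt_succ_of_le hin⟩) :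
          M (n + 1) →ₗ[k] M (n + 1))) ∘ₗ A n i = A n (i - 1))
    (hswap_gt : ∀ (n i j : ℕ), ∀ _ : 1 ≤ i, ∀ hij : i < j, ∀ hjn : j ≤ n + 1,
      ((ρ (n + 1) (Equiv.swap (⟨i - 1, Nat.lt_of_le_of_lt (Nat.sub_le i 1) (Nat.lt_succ_of_le (Nat.le_of_lt (Nat.lt_of_lt_of_le hij hjn)))⟩ : Fin (n + 2)) ⟨i, Nat.lt_succ_of_le (Nat.le_of_lt (Nat.lt_of_lt_of_le hij hjn))⟩) :
          M (n + 1) →ₗ[k] M (n + 1))) ∘ₗ A n j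
        = A n j ∘ₗ ((ρ n (Equiv.swap (⟨i - 1, Nat.lt_of_le_of_lt (Nat.sub_le i 1) (Nat.lt_of_lt_of_le hij hjn)⟩ : Fin (n + 1)) ⟨i, Nat.lt_of_lt_of_le hij hjn⟩) :
            M n →ₗ[k] M n)))

include hswap_lt hswap_eq1 hswap_eq2 hswap_gt

lemma base_s
    (n : ℕ) (v : M n) (hv : altOp k (ρ n) v = v) (i : ℕ) (hi1 : 1 ≤ i) (hin : i ≤ n + 1) :
    ρ (n + 1) (Equiv.swap (⟨i - 1, Nat.lt_of_le_of_lt (Nat.sub_le i 1) (Nat.lt_succ_of_le hin)⟩ : Fin (n + 2)) ⟨i, Nat.lt_succ_of_le hin⟩) (AStar A n v)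
      = - AStar A n v := by
  rw [AStar_apply, map_sum, ← Finset.sum_neg_distrib]
  refine Finset.sum_equiv (Equiv.swap (i - 1) i) ?_ ?_
  · intro j
    simp only [Finset.mem_range]
    rcases eq_or_ne j (i - 1) with rfl | h1
    · rw [Equiv.swap_apply_left]; omega
    rcases eq_or_ne j i with rfl | h2
    · rw [Equiv.swap_apply_right]; omega
    · rw [Equiv.swap_apply_of_ne_of_ne h1 h2]
  · intro j hj
    simp only [Finset.mem_range] at hj
    have hpow : ((-1 : k) ^ i) = -(-1 : k) ^ (i - 1) := by
      conv_lhs => rw [show i = (i - 1) + 1 by omega]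
      rw [pow_succ]; ring
    rcases eq_or_ne j (i - 1) with rfl | h1
    · rw [Equiv.swap_apply_left]
      rw [map_smul]
      rw [show (ρ (n + 1) (Equiv.swap (⟨i - 1, by omega⟩ : Fin (n + 2)) ⟨i, by omega⟩))
            (A n (i - 1) v) = A n i v from
        LinearMap.congr_fun (hswap_eq1 n i hi1 hin) v]
      rw [hpow]; module
    rcases eq_or_ne j i with h2 | h2
    · simp only [h2]
      rw [Equiv.swap_apply_right]
      rw [map_smul]
      rw [show (ρ (n + 1) (Equiv.swap (⟨i - 1, by omega⟩ : Fin (n + 2)) ⟨i, by omega⟩))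
            (A n i v) = A n (i - 1) v from
        LinearMap.congr_fun (hswap_eq2 n i hi1 hin) v]
      rw [hpow]; module
    · rw [Equiv.swap_apply_of_ne_of_ne h1 h2, map_smul]
      have key : (ρ (n + 1) (Equiv.swap (⟨i - 1, by omega⟩ : Fin (n + 2)) ⟨i, by omega⟩))
          (A n j v) = - A n j v := by
        rcases lt_or_gt_of_ne (by omega : j ≠ i) with hlt | hgt
        · -- j < i, j ≠ i - 1 so j + 1 < i, hence i ≥ 2
          have hj1 : j + 1 < i := by omega
          have h2i : 2 ≤ i := by omega
          rw [show (ρ (n + 1) (Equiv.swap (⟨i - 1, by omega⟩ : Fin (n + 2)) ⟨i, by omega⟩))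
                (A n j v)
              = A n j ((ρ n (Equiv.swap (⟨i - 2, by omega⟩ : Fin (n + 1)) ⟨i - 1, by omega⟩)) v)
            from LinearMap.congr_fun (hswap_lt n i j hi1 hin hj1) v]
          rw [rho_of_alt_fixed (ρ n) hv, Equiv.Perm.sign_swap
            (by simp only [ne_eq, Fin.mk.injEq]; omega), map_smul]
          norm_num
        · have hjn : j ≤ n + 1 := by omega
          rw [show (ρ (n + 1) (Equiv.swap (⟨i - 1, by omega⟩ : Fin (n + 2)) ⟨i, by omega⟩))
                (A n j v)
              = A n j ((ρ n (Equiv.swap (⟨i - 1, by omega⟩ : Fin (n + 1)) ⟨i, by omega⟩)) v)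
            from LinearMap.congr_fun (hswap_gt n i j hi1 hgt hjn) v]
          rw [rho_of_alt_fixed (ρ n) hv, Equiv.Perm.sign_swap
            (by simp only [ne_eq, Fin.mk.injEq]; omega), map_smul]
          norm_num
      rw [key]; module


lemma key_s (n : ℕ) (v : M n) (hv : altOp k (ρ n) v = v) (σ : Perm (Fin (n + 2))) :
    ρ (n + 1) σ (AStar A n v) = ((Perm.sign σ : ℤ) : k) • AStar A n v := by
  have hσ : σ ∈ Submonoid.closure
      (Set.range fun a : Fin (n + 1) => Equiv.swap a.castSucc a.succ) := by
    rw [Equiv.Perm.mclosure_swap_castSucc_succ]; exact Submonoid.mem_top σ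
  induction hσ using Submonoid.closure_induction with
  | mem x hx =>
    obtain ⟨a, rfl⟩ := hx
    dsimp only
    have hswap : Equiv.swap (Fin.castSucc a) (Fin.succ a)
        = Equiv.swap (⟨(a : ℕ) + 1 - 1, by omega⟩ : Fin (n + 2)) ⟨(a : ℕ) + 1, by omega⟩ := by
      congr 1 <;> apply Fin.ext <;> simp
    rw [hswap, base_s k M ρ A hswap_lt hswap_eq1 hswap_eq2 hswap_gt n v hv ((a : ℕ) + 1)
        (by omega) (by omega),
      Equiv.Perm.sign_swap (by simp only [ne_eq, Fin.mk.injEq]; omega)]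
    norm_num
  | one => simp
  | mul x y hx hy ihx ihy =>
    rw [map_mul, Module.End.mul_apply, ihy, map_smul, ihx, map_mul]
    push_cast
    rw [smul_smul, mul_comm]

lemma sSub (n : ℕ) (v : M n) (hv : altOp k (ρ n) v = v) :
    altOp k (ρ (n + 1)) (AStar A n v) = AStar A n v :=
  altOp_fixed_of_sign _ fun σ => key_s k M ρ A hswap_lt hswap_eq1 hswap_eq2 hswap_gt n v hv σ

lemma base_r (n i j : ℕ) (hi1 : 1 ≤ i) (hin : i ≤ n) (hjn : j ≤ n + 1) (v : M n) :
    altOp k (ρ (n + 1))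
        (A n j (ρ n (Equiv.swap (⟨i - 1, by omega⟩ : Fin (n + 1)) ⟨i, by omega⟩) v))
      = - altOp k (ρ (n + 1)) (A n j v) := by
  rcases lt_trichotomy j i with hlt | heq | hgt
  · have h := hswap_lt n (i + 1) j (by omega) (by omega) (by omega)
    simp only [show i + 1 - 2 = i - 1 from by omega, Nat.add_sub_cancel] at h
    have h' := LinearMap.congr_fun h v
    simp only [LinearMap.comp_apply] at h'
    rw [← h', altOp_rho, Equiv.Perm.sign_swap (by simp only [ne_eq, Fin.mk.injEq]; omega)]
    norm_num
  · rw [heq]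
    have h1 := LinearMap.congr_fun (hswap_eq1 n i hi1 (by omega))
      ((ρ n (Equiv.swap (⟨i - 1, by omega⟩ : Fin (n + 1)) ⟨i, by omega⟩)) v)
    have h2 := LinearMap.congr_fun (hswap_eq2 n i hi1 (by omega)) v
    have h3 := hswap_lt n (i + 1) (i - 1) (by omega) (by omega) (by omega)
    simp only [show i + 1 - 2 = i - 1 from by omega, Nat.add_sub_cancel] at h3
    have h3' := LinearMap.congr_fun h3 v
    simp only [LinearMap.comp_apply] at h1 h2 h3'
    rw [← h1, altOp_rho, Equiv.Perm.sign_swap (by simp only [ne_eq, Fin.mk.injEq]; omega),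
      ← h3', altOp_rho, Equiv.Perm.sign_swap (by simp only [ne_eq, Fin.mk.injEq]; omega),
      ← h2, altOp_rho, Equiv.Perm.sign_swap (by simp only [ne_eq, Fin.mk.injEq]; omega)]
    norm_num
  · have h := hswap_gt n i j hi1 hgt hjn
    have h' := LinearMap.congr_fun h v
    simp only [LinearMap.comp_apply] at h'
    rw [← h', altOp_rho, Equiv.Perm.sign_swap (by simp only [ne_eq, Fin.mk.injEq]; omega)]
    norm_num

lemma key_r (n j : ℕ) (hjn : j ≤ n + 1) (σ : Perm (Fin (n + 1))) (v : M n) :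
    altOp k (ρ (n + 1)) (A n j (ρ n σ v))
      = ((Perm.sign σ : ℤ) : k) • altOp k (ρ (n + 1)) (A n j v) := by
  have hσ : σ ∈ Submonoid.closure
      (Set.range fun a : Fin n => Equiv.swap a.castSucc a.succ) := by
    rw [Equiv.Perm.mclosure_swap_castSucc_succ]; exact Submonoid.mem_top σ
  induction hσ using Submonoid.closure_induction generalizing v with
  | mem x hx =>
    obtain ⟨a, rfl⟩ := hx
    dsimp only
    have hswap : Equiv.swap (Fin.castSucc a) (Fin.succ a)
        = Equiv.swap (⟨(a : ℕ) + 1 - 1, by omega⟩ : Fin (n + 1)) ⟨(a : ℕ) + 1, by omega⟩ := by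
      congr 1 <;> apply Fin.ext <;> simp
    rw [hswap, base_r k M ρ A hswap_lt hswap_eq1 hswap_eq2 hswap_gt n ((a : ℕ) + 1) j
        (by omega) (by omega) hjn v,
      Equiv.Perm.sign_swap (by simp only [ne_eq, Fin.mk.injEq]; omega)]
    norm_num
  | one => simp
  | mul x y hx hy ihx ihy =>
    rw [map_mul, Module.End.mul_apply, ihx, ihy, map_mul]
    push_cast
    rw [smul_smul, mul_comm]

lemma rSub (n : ℕ) (v : M n) (hv : altOp k (ρ n) v = 0) :
    altOp k (ρ (n + 1)) (AStar A n v) = 0 := by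
  have hj : ∀ j, j ≤ n + 1 → altOp k (ρ (n + 1)) (A n j v) = 0 := by
    intro j hjn
    have h0 : altOp k (ρ (n + 1)) (A n j (altOp k (ρ n) v))
        = altOp k (ρ (n + 1)) (A n j v) := by
      rw [altOp_apply (ρ n) v]
      simp only [map_smul, map_sum]
      have hterm : ∀ σ : Perm (Fin (n + 1)),
          ((Perm.sign σ : ℤ) : k) • altOp k (ρ (n + 1)) (A n j (ρ n σ v))
            = ((Perm.sign σ : ℤ) : k) • ((Perm.sign σ : ℤ) : k)
                • altOp k (ρ (n + 1)) (A n j v) := fun σ => by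
        rw [key_r k M ρ A hswap_lt hswap_eq1 hswap_eq2 hswap_gt n j hjn σ v]
      rw [Finset.sum_congr rfl fun σ _ => hterm σ]
      exact avg_cancel _
    rw [hv, map_zero, map_zero] at h0
    exact h0.symm
  rw [AStar_apply, map_sum]
  simp only [map_smul]
  refine Finset.sum_eq_zero fun j hj' => ?_
  rw [hj j (by simp only [Finset.mem_range] at hj'; omega), smul_zero]

lemma commAlt (n : ℕ) (v : M n) :
    altOp k (ρ (n + 1)) (AStar A n v) = AStar A n (altOp k (ρ n) v) := by
  have hs := sSub k M ρ A hswap_lt hswap_eq1 hswap_eq2 hswap_gt n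
    (altOp k (ρ n) v) (altOp_idem (ρ n) v)
  have hr := rSub k M ρ A hswap_lt hswap_eq1 hswap_eq2 hswap_gt n
    (v - altOp k (ρ n) v) (by rw [map_sub, altOp_idem, sub_self])
  have hsplit : AStar A n v
      = AStar A n (altOp k (ρ n) v) + AStar A n (v - altOp k (ρ n) v) := by
    rw [← map_add, show altOp k (ρ n) v + (v - altOp k (ρ n) v) = v from by abel]
  rw [hsplit, map_add, hs, hr, add_zero]

end main

/-- For a cosimplicial `Σ_•`-module `M^•` over a field of characteristic zero with
differential `A*` (satisfying `A* ∘ A* = 0`), the subspaces `sM^•` (fixed points of `Alt`)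
and `rM^• = ker Alt` are subcomplexes, and the cohomology of `M^•` has a sign decomposition
`H^n(M^•) = H^n(sM^•) ⊕ H^n(rM^•)`: the map induced by the inclusions of the two
subcomplexes is bijective on cohomology in every degree. -/
theorem cohomology_sign_decomposition
    (k : Type*) [Field k] [CharZero k]
    (M : ℕ → Type*) [∀ n, AddCommGroup (M n)] [∀ n, Module k (M n)]
    (ρ : ∀ n, Equiv.Perm (Fin (n + 1)) →* Module.End k (M n))
    (A : ∀ n, ℕ → (M n →ₗ[k] M (n + 1)))
    -- the standard cosimplicial coface identities
    (hcoface : ∀ (n i j : ℕ), i < j → j ≤ n + 2 →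
      (A (n + 1) j) ∘ₗ (A n i) = (A (n + 1) i) ∘ₗ (A n (j - 1)))
    -- compatibility with adjacent transpositions:  (i−1,i) ∘ A_j = A_j ∘ (i−2,i−1) for j < i−1
    (hswap_lt : ∀ (n i j : ℕ), ∀ _ : 1 ≤ i, ∀ hin : i ≤ n + 1, j + 1 < i →
      ((ρ (n + 1) (Equiv.swap (⟨i - 1, by omega⟩ : Fin (n + 2)) ⟨i, by omega⟩) :
          M (n + 1) →ₗ[k] M (n + 1))) ∘ₗ A n j
        = A n j ∘ₗ ((ρ n (Equiv.swap (⟨i - 2, by omega⟩ : Fin (n + 1)) ⟨i - 1, by omega⟩) :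
            M n →ₗ[k] M n)))
    -- (i−1,i) ∘ A_{i−1} = A_i
    (hswap_eq1 : ∀ (n i : ℕ), ∀ _ : 1 ≤ i, ∀ hin : i ≤ n + 1,
      ((ρ (n + 1) (Equiv.swap (⟨i - 1, by omega⟩ : Fin (n + 2)) ⟨i, by omega⟩) :
          M (n + 1) →ₗ[k] M (n + 1))) ∘ₗ A n (i - 1) = A n i)
    -- (i−1,i) ∘ A_i = A_{i−1}
    (hswap_eq2 : ∀ (n i : ℕ), ∀ _ : 1 ≤ i, ∀ hin : i ≤ n + 1,
      ((ρ (n + 1) (Equiv.swap (⟨i - 1, by omega⟩ : Fin (n + 2)) ⟨i, by omega⟩) :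
          M (n + 1) →ₗ[k] M (n + 1))) ∘ₗ A n i = A n (i - 1))
    -- (i−1,i) ∘ A_j = A_j ∘ (i−1,i) for j > i
    (hswap_gt : ∀ (n i j : ℕ), ∀ _ : 1 ≤ i, ∀ hij : i < j, ∀ hjn : j ≤ n + 1,
      ((ρ (n + 1) (Equiv.swap (⟨i - 1, by omega⟩ : Fin (n + 2)) ⟨i, by omega⟩) :
          M (n + 1) →ₗ[k] M (n + 1))) ∘ₗ A n j
        = A n j ∘ₗ ((ρ n (Equiv.swap (⟨i - 1, by omega⟩ : Fin (n + 1)) ⟨i, by omega⟩) :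
            M n →ₗ[k] M n)))
    -- A* is a differential
    (hdd : ∀ n : ℕ, (AStar A (n + 1)) ∘ₗ (AStar A n) = 0) :
    -- sM^• is a subcomplex
    (∀ (n : ℕ) (v : M n), altOp k (ρ n) v = v →
      altOp k (ρ (n + 1)) (AStar A n v) = AStar A n v) ∧
    -- rM^• is a subcomplex
    (∀ (n : ℕ) (v : M n), altOp k (ρ n) v = 0 →
      altOp k (ρ (n + 1)) (AStar A n v) = 0) ∧
    -- surjectivity on H^0 : every cocycle in M^0 is the sum of an s-cocycle and an r-cocycle
    (∀ v : M 0, AStar A 0 v = 0 →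
      ∃ vs vr : M 0, altOp k (ρ 0) vs = vs ∧ altOp k (ρ 0) vr = 0 ∧
        AStar A 0 vs = 0 ∧ AStar A 0 vr = 0 ∧ v = vs + vr) ∧
    -- injectivity on H^0
    (∀ vs vr : M 0, altOp k (ρ 0) vs = vs → altOp k (ρ 0) vr = 0 →
      AStar A 0 vs = 0 → AStar A 0 vr = 0 → vs + vr = 0 → vs = 0 ∧ vr = 0) ∧
    -- surjectivity on H^{n+1}
    (∀ (n : ℕ) (v : M (n + 1)), AStar A (n + 1) v = 0 →
      ∃ (vs vr : M (n + 1)) (u : M n),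
        altOp k (ρ (n + 1)) vs = vs ∧ altOp k (ρ (n + 1)) vr = 0 ∧
        AStar A (n + 1) vs = 0 ∧ AStar A (n + 1) vr = 0 ∧ v = vs + vr + AStar A n u) ∧
    -- injectivity on H^{n+1}
    (∀ (n : ℕ) (vs vr : M (n + 1)),
      altOp k (ρ (n + 1)) vs = vs → altOp k (ρ (n + 1)) vr = 0 →
      AStar A (n + 1) vs = 0 → AStar A (n + 1) vr = 0 →
      (∃ u : M n, vs + vr = AStar A n u) →
      (∃ us : M n, altOp k (ρ n) us = us ∧ vs = AStar A n us) ∧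
      (∃ ur : M n, altOp k (ρ n) ur = 0 ∧ vr = AStar A n ur)) := by
  have S := sSub k M ρ A hswap_lt hswap_eq1 hswap_eq2 hswap_gt
  have R := rSub k M ρ A hswap_lt hswap_eq1 hswap_eq2 hswap_gt
  have C := commAlt k M ρ A hswap_lt hswap_eq1 hswap_eq2 hswap_gt
  refine ⟨S, R, ?_, ?_, ?_, ?_⟩
  · intro v hv
    refine ⟨altOp k (ρ 0) v, v - altOp k (ρ 0) v, altOp_idem (ρ 0) v,
      by rw [map_sub, altOp_idem, sub_self], ?_, ?_, by abel⟩
    · rw [← C 0 v, hv, map_zero]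
    · rw [map_sub, hv, ← C 0 v, hv, map_zero, zero_sub, neg_zero]
  · intro vs vr hs hr _ _ hsum
    have h1 : altOp k (ρ 0) (vs + vr) = vs := by rw [map_add, hs, hr, add_zero]
    rw [hsum, map_zero] at h1
    exact ⟨h1.symm, by rw [← h1] at hsum; simpa using hsum⟩
  · intro n v hv
    refine ⟨altOp k (ρ (n + 1)) v, v - altOp k (ρ (n + 1)) v, 0, altOp_idem (ρ (n + 1)) v,
      by rw [map_sub, altOp_idem, sub_self], ?_, ?_, by rw [map_zero, add_zero]; abel⟩
    · rw [← C (n + 1) v, hv, map_zero]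
    · rw [map_sub, hv, ← C (n + 1) v, hv, map_zero, zero_sub, neg_zero]
  · rintro n vs vr hs hr hds hdr ⟨u, hu⟩
    have h1 : AStar A n (altOp k (ρ n) u) = vs := by
      rw [← C n u, ← hu, map_add, hs, hr, add_zero]
    refine ⟨⟨altOp k (ρ n) u, altOp_idem (ρ n) u, h1.symm⟩,
      ⟨u - altOp k (ρ n) u, by rw [map_sub, altOp_idem, sub_self], ?_⟩⟩
    rw [map_sub, ← hu, h1]
    abel
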